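/- Let p ∈ (0,1) and β ∈ ℝ with β²·p·(1−p) > 1. Then the equation σ = tanh(β·(1−p)·tanh(β·p·σ)) has a unique positive real solution σ*, and its set of real solutions is exactly {−σ*, 0, σ*}. -/

import Mathlib

open Real

lemma fps_hasDerivAt_tanh (x : ℝ) : HasDerivAt Real.tanh (1 / Real.cosh x ^ 2) x := by
  have h := (Real.hasDerivAt_sinh x).div (Real.hasDerivAt_cosh x) (ne_of_gt (Real.cosh_pos x))
  have he : Real.tanh = fun y => Real.sinh y / Real.cosh y :=
    funext fun y => Real.tanh_eq_sinh_div_cosh y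
  rw [he]
  refine h.congr_deriv ?_
  have := Real.cosh_sq_sub_sinh_sq x
  field_simp
  nlinarith [Real.cosh_pos x]

lemma fps_continuous_tanh : Continuous Real.tanh :=
  continuous_iff_continuousAt.2 fun x => (fps_hasDerivAt_tanh x).continuousAt

lemma fps_deriv_tanh : deriv Real.tanh = fun x => 1 / Real.cosh x ^ 2 :=
  funext fun x => (fps_hasDerivAt_tanh x).deriv

lemma fps_tanh_strictMono : StrictMono Real.tanh :=
  strictMono_of_deriv_pos (by
    rw [fps_deriv_tanh]
    intro x; positivity)

lemma fps_tanh_pos {x : ℝ} (hx : 0 < x) : 0 < Real.tanh x := by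
  have := fps_tanh_strictMono hx
  rwa [Real.tanh_zero] at this

lemma fps_tanh_lt_one (x : ℝ) : Real.tanh x < 1 := by
  rw [Real.tanh_eq_sinh_div_cosh, div_lt_one (Real.cosh_pos x)]
  exact Real.sinh_lt_cosh x

lemma fps_strictConcave : StrictConcaveOn ℝ (Set.Ici 0) Real.tanh := by
  apply strictConcaveOn_of_deriv2_neg (convex_Ici 0) fps_continuous_tanh.continuousOn
  intro x hx
  rw [interior_Ici] at hx
  have h2 : HasDerivAt (fun y => 1 / Real.cosh y ^ 2)
      (-(2 * Real.sinh x * Real.cosh x) / (Real.cosh x ^ 2) ^ 2) x := by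
    have hc : HasDerivAt (fun y => Real.cosh y ^ 2) (2 * Real.sinh x * Real.cosh x) x := by
      have := (Real.hasDerivAt_cosh x).pow 2
      refine this.congr_deriv ?_; ring
    have := hc.inv (by positivity)
    simpa [one_div, Pi.inv_def] using this
  have hd2 : deriv (deriv Real.tanh) x = -(2 * Real.sinh x * Real.cosh x) / (Real.cosh x ^ 2) ^ 2 := by
    rw [fps_deriv_tanh]; exact h2.deriv
  rw [show deriv^[2] Real.tanh = deriv (deriv Real.tanh) from rfl, hd2]
  have hs : 0 < Real.sinh x := by
    have := Real.sinh_lt_sinh.2 hx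
    rwa [Real.sinh_zero] at this
  have hc := Real.cosh_pos x
  have : 0 < 2 * Real.sinh x * Real.cosh x := by positivity
  apply div_neg_of_neg_of_pos (by linarith) (by positivity)

-- chord inequality: for 0 < x < y, x * tanh y < y * tanh x
lemma fps_chord {x y : ℝ} (hx : 0 < x) (hxy : x < y) :
    x * Real.tanh y < y * Real.tanh x := by
  have hy : 0 < y := hx.trans hxy
  have ha0 : (0:ℝ) < 1 - x / y := by rw [sub_pos, div_lt_one hy]; exact hxy
  have hb0 : (0:ℝ) < x / y := by positivity
  have h := fps_strictConcave.2 (Set.self_mem_Ici) (Set.mem_Ici.2 hy.le) (by linarith : (0:ℝ) ≠ y)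
      ha0 hb0 (by ring)
  simp only [smul_eq_mul, mul_zero, Real.tanh_zero, zero_add] at h
  have hxe : x / y * y = x := div_mul_cancel₀ x hy.ne'
  rw [hxe, div_mul_eq_mul_div, div_lt_iff₀ hy] at h
  linarith [h, mul_comm (Real.tanh x) y]

-- no two positive fixed points
lemma fps_unique {a b s t : ℝ} (ha : 0 < a) (hb : 0 < b) (hs : 0 < s) (hst : s < t)
    (hfs : s = Real.tanh (a * Real.tanh (b * s)))
    (hft : t = Real.tanh (a * Real.tanh (b * t))) : False := by
  set u := Real.tanh (b * s) with hu
  set v := Real.tanh (b * t) with hv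
  have hu0 : 0 < u := fps_tanh_pos (by positivity)
  have huv : u < v := fps_tanh_strictMono (by nlinarith)
  have h1 : (b * s) * v < (b * t) * u := fps_chord (by positivity) (by nlinarith)
  have h2 : (a * u) * Real.tanh (a * v) < (a * v) * Real.tanh (a * u) := by
    exact fps_chord (by positivity) (by nlinarith)
  rw [← hfs, ← hft] at h2
  nlinarith

lemma fps_main (a b : ℝ) (ha : 0 < a) (hb : 0 < b) (hab : 1 < a * b) :
    ∃ s : ℝ, 0 < s ∧ s = Real.tanh (a * Real.tanh (b * s)) ∧
      {σ : ℝ | σ = Real.tanh (a * Real.tanh (b * σ))} = {-s, 0, s} := by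
  set f : ℝ → ℝ := fun σ => Real.tanh (a * Real.tanh (b * σ)) with hf
  have hcont : Continuous f := by
    apply fps_continuous_tanh.comp
    exact (continuous_const.mul ((fps_continuous_tanh.comp (continuous_const.mul continuous_id)))) 
  have hf0 : f 0 = 0 := by simp [hf, Real.tanh_zero]
  have hfodd : ∀ σ, f (-σ) = - f σ := by
    intro σ
    simp only [hf]
    rw [show b * -σ = -(b * σ) by ring, Real.tanh_neg, show a * -Real.tanh (b*σ) = -(a * Real.tanh (b*σ)) by ring, Real.tanh_neg]
  -- derivative at 0 is a*b
  have hderiv : HasDerivAt f (a * b) 0 := by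
    have h1 : HasDerivAt (fun σ : ℝ => b * σ) b 0 := by
      simpa using (hasDerivAt_id (0:ℝ)).const_mul b
    have h2 : HasDerivAt (fun σ : ℝ => Real.tanh (b * σ)) (1 / Real.cosh (b * 0) ^ 2 * b) 0 :=
      (fps_hasDerivAt_tanh (b * 0)).comp 0 h1
    have h3 : HasDerivAt (fun σ : ℝ => a * Real.tanh (b * σ)) (a * (1 / Real.cosh (b * 0) ^ 2 * b)) 0 :=
      h2.const_mul a
    have h4 := (fps_hasDerivAt_tanh (a * Real.tanh (b * 0))).comp 0 h3
    have : a * Real.tanh (b * 0) = 0 := by simp [Real.tanh_zero]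
    rw [this] at h4
    refine h4.congr_deriv ?_
    simp [Real.cosh_zero]
  -- find small ε with ε < f ε
  obtain ⟨ε, hε0, hε1, hεf⟩ : ∃ ε : ℝ, 0 < ε ∧ ε < 1 ∧ ε < f ε := by
    have hslope := hasDerivAt_iff_tendsto_slope.1 hderiv
    have hslope' : Filter.Tendsto (slope f 0) (nhdsWithin 0 (Set.Ioi 0)) (nhds (a * b)) :=
      hslope.mono_left (nhdsWithin_mono 0 (fun x hx => ne_of_gt hx))
    have hev : ∀ᶠ x in nhdsWithin 0 (Set.Ioi 0), 1 < slope f 0 x :=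
      hslope' (Ioi_mem_nhds hab)
    have hev2 : ∀ᶠ x in nhdsWithin 0 (Set.Ioi 0), x ∈ Set.Ioo (0:ℝ) 1 :=
      Ioo_mem_nhdsGT_of_mem (by constructor <;> norm_num)
    obtain ⟨x, hx1, hx2⟩ := (hev.and hev2).exists
    refine ⟨x, hx2.1, hx2.2, ?_⟩
    have : slope f 0 x = f x / x := by
      simp [slope, hf0, div_eq_inv_mul]
    rw [this] at hx1
    have := (lt_div_iff₀ hx2.1).1 hx1
    linarith
  -- f 1 < 1
  have hf1 : f 1 < 1 := fps_tanh_lt_one _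
  -- IVT on g = f - id
  have hg : ContinuousOn (fun σ => f σ - σ) (Set.Icc ε 1) :=
    (hcont.sub continuous_id).continuousOn
  have hmem : (0:ℝ) ∈ Set.Icc (f 1 - 1) (f ε - ε) := ⟨by linarith, by linarith⟩
  obtain ⟨s, hsmem, hseq⟩ := intermediate_value_Icc' hε1.le hg hmem
  have hs0 : 0 < s := lt_of_lt_of_le hε0 hsmem.1
  have hsfix : s = f s := by simp at hseq; linarith
  refine ⟨s, hs0, hsfix, ?_⟩
  have huniq : ∀ σ : ℝ, 0 < σ → σ = f σ → σ = s := by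
    intro σ hσ hσf
    rcases lt_trichotomy σ s with h | h | h
    · exact absurd (fps_unique ha hb hσ h hσf hsfix) not_false
    · exact h
    · exact absurd (fps_unique ha hb hs0 h hsfix hσf) not_false
  ext σ
  simp only [Set.mem_setOf_eq, Set.mem_insert_iff, Set.mem_singleton_iff]
  constructor
  · intro hσ
    rcases lt_trichotomy σ 0 with h | h | h
    · left
      have hneg : -σ = f (-σ) := by rw [hfodd]; linarith
      have := huniq (-σ) (by linarith) hneg
      linarith
    · right; left; exact h
    · right; right; exact huniq σ h hσ
  · rintro (rfl | rfl | rfl)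
    · show -s = f (-s)
      rw [hfodd]; linarith [hsfix]
    · show (0:ℝ) = f 0
      exact hf0.symm
    · exact hsfix

theorem fixed_point_supercritical (p β : ℝ) (hp : p ∈ Set.Ioo (0 : ℝ) 1)
    (hβ : 1 < β ^ 2 * p * (1 - p)) :
    ∃ s : ℝ, 0 < s ∧ s = Real.tanh (β * (1 - p) * Real.tanh (β * p * s)) ∧
      {σ : ℝ | σ = Real.tanh (β * (1 - p) * Real.tanh (β * p * σ))} = {-s, 0, s} := by
  obtain ⟨hp0, hp1⟩ := hp
  have hβ0 : β ≠ 0 := by rintro rfl; norm_num at hβ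
  set a := |β| * (1 - p) with ha'
  set b := |β| * p with hb'
  have habs : 0 < |β| := abs_pos.2 hβ0
  have ha : 0 < a := mul_pos habs (by linarith)
  have hb : 0 < b := mul_pos habs hp0
  have hab : 1 < a * b := by
    have h : a * b = β ^ 2 * p * (1 - p) := by rw [ha', hb', ← sq_abs]; ring
    linarith
  have key : ∀ σ : ℝ, Real.tanh (β * (1 - p) * Real.tanh (β * p * σ)) =
      Real.tanh (a * Real.tanh (b * σ)) := by
    intro σ
    rcases abs_cases β with ⟨h, _⟩ | ⟨h, _⟩
    · rw [ha', hb', h]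
    · rw [ha', hb', h]
      rw [show -β * p * σ = -(β * p * σ) by ring, Real.tanh_neg]
      congr 1; ring
  obtain ⟨s, hs0, hsfix, hset⟩ := fps_main a b ha hb hab
  refine ⟨s, hs0, ?_, ?_⟩
  · rw [key]; exact hsfix
  · rw [show {σ : ℝ | σ = Real.tanh (β * (1 - p) * Real.tanh (β * p * σ))}
        = {σ : ℝ | σ = Real.tanh (a * Real.tanh (b * σ))} from by
      ext σ; rw [Set.mem_setOf_eq, Set.mem_setOf_eq, key], hset]
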